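/- arXiv:2511.08534 — 3 statements merged into one kernel-verified Lean document; each statement's English description precedes it below -/
import Mathlib

section
/- Let N be a positive integer and b ∈ ℂ^N. Then there exists φ ∈ {−1,1}^N such that |Σ_{n=1}^N b_n φ_n|² ≥ (1/4) · sup{ |Σ_{n=1}^N b_n ψ_n|² : ψ ∈ ℂ^N, |ψ_n| = 1 for all n }. That is, regardless of the structure of b, a 1-bit (±1) configuration attains at least a quarter of the squared maximum achievable with continuous unit-modulus phase shifts, the latter maximum being (Σ_n |b_n|)². -/
open Finset

/-- A 1-bit (`±1`) configuration attains at least a quarter of the squared maximum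
achievable with continuous unit-modulus phase shifts. -/
theorem one_bit_quarter_of_continuous_sup (N : ℕ) (hN : 0 < N) (b : Fin N → ℂ) :
    ∃ φ : Fin N → ℂ, (∀ n, φ n = 1 ∨ φ n = -1) ∧
      (1 / 4) * sSup {x : ℝ | ∃ ψ : Fin N → ℂ,
          (∀ n, ‖ψ n‖ = 1) ∧ x = ‖∑ n, b n * ψ n‖ ^ 2}
        ≤ ‖∑ n, b n * φ n‖ ^ 2 := by
  classical
  set S := ∑ n, ‖b n‖ with hSdef
  have hS0 : 0 ≤ S := Finset.sum_nonneg fun _ _ => norm_nonneg _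
  have hsup : sSup {x : ℝ | ∃ ψ : Fin N → ℂ,
      (∀ n, ‖ψ n‖ = 1) ∧ x = ‖∑ n, b n * ψ n‖ ^ 2} ≤ S ^ 2 := by
    apply Real.sSup_le
    · rintro x ⟨ψ, hψ, rfl⟩
      have h1 : ‖∑ n, b n * ψ n‖ ≤ S := by
        calc ‖∑ n, b n * ψ n‖ ≤ ∑ n, ‖b n * ψ n‖ :=
          norm_sum_le _ _
        _ = S := by simp [norm_mul, hψ, hSdef]
      exact pow_le_pow_left₀ (norm_nonneg _) h1 2
    · positivity
  set R := ∑ n, |(b n).re| with hRdef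
  set I := ∑ n, |(b n).im| with hIdef
  have hR0 : 0 ≤ R := Finset.sum_nonneg fun _ _ => abs_nonneg _
  have hI0 : 0 ≤ I := Finset.sum_nonneg fun _ _ => abs_nonneg _
  have hRI : S ≤ R + I := by
    rw [hSdef, hRdef, hIdef, ← Finset.sum_add_distrib]
    exact Finset.sum_le_sum fun n _ => Complex.norm_le_abs_re_add_abs_im _
  by_cases hcase : I ≤ R
  · refine ⟨fun n => if 0 ≤ (b n).re then 1 else -1, fun n => by dsimp only; split <;> simp, ?_⟩
    have hre : (∑ n, b n * (if 0 ≤ (b n).re then 1 else -1)).re = R := by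
      rw [Complex.re_sum, hRdef]
      refine Finset.sum_congr rfl fun n _ => ?_
      by_cases h : 0 ≤ (b n).re
      · simp [h, abs_of_nonneg h]
      · simp [h, abs_of_neg (lt_of_not_ge h)]
    have habs : R ≤ ‖∑ n, b n * (if 0 ≤ (b n).re then 1 else -1)‖ := by
      rw [← hre]; exact Complex.re_le_norm _
    have hS2R : S ≤ 2 * R := by linarith
    calc (1/4) * sSup _ ≤ (1/4) * S ^ 2 := by
            exact mul_le_mul_of_nonneg_left hsup (by norm_num)
      _ ≤ R ^ 2 := by nlinarith [pow_le_pow_left₀ hS0 hS2R 2]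
      _ ≤ _ := pow_le_pow_left₀ hR0 habs 2
  · push_neg at hcase
    refine ⟨fun n => if 0 ≤ (b n).im then 1 else -1, fun n => by dsimp only; split <;> simp, ?_⟩
    have him : (∑ n, b n * (if 0 ≤ (b n).im then 1 else -1)).im = I := by
      rw [Complex.im_sum, hIdef]
      refine Finset.sum_congr rfl fun n _ => ?_
      by_cases h : 0 ≤ (b n).im
      · simp [h, abs_of_nonneg h]
      · simp [h, abs_of_neg (lt_of_not_ge h)]
    have habs : I ≤ ‖∑ n, b n * (if 0 ≤ (b n).im then 1 else -1)‖ := by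
      rw [← him]
      exact le_trans (le_abs_self _) (Complex.abs_im_le_norm _)
    have hS2I : S ≤ 2 * I := by linarith
    calc (1/4) * sSup _ ≤ (1/4) * S ^ 2 := by
            exact mul_le_mul_of_nonneg_left hsup (by norm_num)
      _ ≤ I ^ 2 := by nlinarith [pow_le_pow_left₀ hS0 hS2I 2]
      _ ≤ _ := pow_le_pow_left₀ hI0 habs 2
end

section
/- Let N be a positive integer and b ∈ ℂ^N with |b_n| = 1 for all n. Then there exists φ ∈ {−1,1}^N such that |Σ_{n=1}^N b_n φ_n|² ≥ N²/4. -/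
open Finset

lemma sa_aux (N : ℕ) (b : Fin N → ℂ) (f : ℂ → ℝ)
    (hf : ∀ z : ℂ, |f z| ≤ ‖z‖)
    (hadd : ∀ z w : ℂ, f (z + w) = f z + f w) (h0 : f 0 = 0)
    (hneg : ∀ z : ℂ, f (z * (-1)) = - f z) (h1 : ∀ z : ℂ, f (z * 1) = f z) :
    ∃ φ : Fin N → ℂ, (∀ n, φ n = 1 ∨ φ n = -1) ∧
      ∑ n, |f (b n)| ≤ ‖∑ n, b n * φ n‖ := by
  refine ⟨fun n => if 0 ≤ f (b n) then 1 else -1, fun n => by dsimp only; split <;> simp, ?_⟩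
  have key : f (∑ n, b n * (if 0 ≤ f (b n) then 1 else -1)) = ∑ n, |f (b n)| := by
    have hs := map_sum (⟨⟨f, h0⟩, hadd⟩ : ℂ →+ ℝ)
      (fun n => b n * (if 0 ≤ f (b n) then 1 else -1)) Finset.univ
    simp only [AddMonoidHom.coe_mk, ZeroHom.coe_mk] at hs
    rw [hs]
    refine Finset.sum_congr rfl fun n _ => ?_
    split
    · rw [h1, abs_of_nonneg ‹_›]
    · rw [hneg, abs_of_neg (lt_of_not_ge ‹_›)]
  calc ∑ n, |f (b n)| = f (∑ n, b n * (if 0 ≤ f (b n) then 1 else -1)) := key.symm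
    _ ≤ |f (∑ n, b n * (if 0 ≤ f (b n) then 1 else -1))| := le_abs_self _
    _ ≤ _ := hf _

/-- For a unit-modulus vector `b ∈ ℂ^N`, a `±1` configuration achieves squared gain
at least `N² / 4`. -/
theorem sign_alignment_unit_modulus (N : ℕ) (hN : 0 < N) (b : Fin N → ℂ)
    (hb : ∀ n, ‖b n‖ = 1) :
    ∃ φ : Fin N → ℂ, (∀ n, φ n = 1 ∨ φ n = -1) ∧
      (N : ℝ) ^ 2 / 4 ≤ ‖∑ n, b n * φ n‖ ^ 2 := by
  have hsum : (N : ℝ) ≤ ∑ n, |(b n).re| + ∑ n, |(b n).im| := by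
    rw [← Finset.sum_add_distrib]
    calc (N : ℝ) = ∑ _n : Fin N, (1 : ℝ) := by simp
      _ ≤ _ := Finset.sum_le_sum fun n _ => by
          rw [← hb n]; exact Complex.norm_le_abs_re_add_abs_im _
  have main : ∃ φ : Fin N → ℂ, (∀ n, φ n = 1 ∨ φ n = -1) ∧
      (N : ℝ) / 2 ≤ ‖∑ n, b n * φ n‖ := by
    by_cases h : (N : ℝ) / 2 ≤ ∑ n, |(b n).re|
    · obtain ⟨φ, hφ, hle⟩ := sa_aux N b Complex.re
        (fun z => Complex.abs_re_le_norm z) (fun z w => rfl) rfl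
        (fun z => by simp) (fun z => by simp)
      exact ⟨φ, hφ, le_trans h hle⟩
    · obtain ⟨φ, hφ, hle⟩ := sa_aux N b Complex.im
        (fun z => Complex.abs_im_le_norm z) (fun z w => rfl) rfl
        (fun z => by simp) (fun z => by simp)
      refine ⟨φ, hφ, le_trans ?_ hle⟩
      push_neg at h
      linarith
  obtain ⟨φ, hφ, hle⟩ := main
  refine ⟨φ, hφ, ?_⟩
  have h2 : ((N : ℝ) / 2) ^ 2 ≤ ‖∑ n, b n * φ n‖ ^ 2 := by
    apply pow_le_pow_left₀ (by positivity) hle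
  calc (N : ℝ) ^ 2 / 4 = ((N : ℝ) / 2) ^ 2 := by ring
    _ ≤ _ := h2
end

section
/- Let a_R ∈ ℂ^{N_R}, a_T ∈ ℂ^{N_T}, a^O, a^I ∈ ℂ^{N_S} be vectors all of whose entries have modulus 1. Then there exists φ ∈ {−1,1}^{N_S} such that, with Φ = diag(φ) and H̃ = a_R (a^O)^H Φ a^I a_T^H, the channel gain satisfies ‖H̃‖_F² ≥ (1/4) · N_R · N_T · N_S². -/
open Finset Matrix

lemma sign_re_choice (N : ℕ) (z : Fin N → ℂ) :
    ∃ φ : Fin N → ℂ, (∀ n, φ n = 1 ∨ φ n = -1) ∧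
      (∑ n, φ n * z n).re = ∑ n, |(z n).re| := by
  refine ⟨fun n => if 0 ≤ (z n).re then 1 else -1, fun n => by
    by_cases h : 0 ≤ (z n).re <;> simp [h], ?_⟩
  rw [Complex.re_sum]
  refine Finset.sum_congr rfl fun n _ => ?_
  by_cases h : 0 ≤ (z n).re
  · simp [h, abs_of_nonneg h]
  · simp [h, abs_of_neg (lt_of_not_ge h)]

/-- Pure-LoS channel gain with a 1-bit RIS: if all steering vectors have unit-modulus
entries, some `±1` configuration `φ` yields `‖H̃‖_F² ≥ (1/4) N_R N_T N_S²`. -/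
theorem los_one_bit_channel_gain (N_R N_T N_S : ℕ)
    (aR : Fin N_R → ℂ) (aT : Fin N_T → ℂ) (aO aI : Fin N_S → ℂ)
    (haR : ∀ i, ‖aR i‖ = 1) (haT : ∀ j, ‖aT j‖ = 1)
    (haO : ∀ n, ‖aO n‖ = 1) (haI : ∀ n, ‖aI n‖ = 1) :
    ∃ φ : Fin N_S → ℂ, (∀ n, φ n = 1 ∨ φ n = -1) ∧
      (1 / 4 : ℝ) * N_R * N_T * (N_S : ℝ) ^ 2 ≤
        ∑ i, ∑ j, ‖
          (((star aO ⬝ᵥ (Matrix.diagonal φ).mulVec aI) •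
            Matrix.vecMulVec aR (star aT)) i j)‖ ^ 2 := by
  set z : Fin N_S → ℂ := fun n => star (aO n) * aI n with hzdef
  have hstar : ∀ w : ℂ, ‖star w‖ = ‖w‖ := fun w =>
    norm_star w
  have hz : ∀ n, ‖z n‖ = 1 := by
    intro n
    simp only [hzdef, norm_mul, haI, hstar, haO]
    ring
  -- key: get φ with N_S/2 ≤ abs (∑ φ n * z n)
  have key : ∃ φ : Fin N_S → ℂ, (∀ n, φ n = 1 ∨ φ n = -1) ∧
      (N_S : ℝ) / 2 ≤ ‖∑ n, φ n * z n‖ := by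
    have hsum : (N_S : ℝ) ≤ (∑ n, |(z n).re|) + ∑ n, |(z n).im| := by
      rw [← Finset.sum_add_distrib]
      calc (N_S : ℝ) = ∑ _n : Fin N_S, (1 : ℝ) := by simp
        _ ≤ _ := Finset.sum_le_sum fun n _ => by
            rw [← hz n]; exact Complex.norm_le_abs_re_add_abs_im _
    by_cases hc : (N_S : ℝ) / 2 ≤ ∑ n, |(z n).re|
    · obtain ⟨φ, hφ, hre⟩ := sign_re_choice N_S z
      refine ⟨φ, hφ, ?_⟩
      calc (N_S : ℝ) / 2 ≤ ∑ n, |(z n).re| := hc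
        _ = (∑ n, φ n * z n).re := hre.symm
        _ ≤ |(∑ n, φ n * z n).re| := le_abs_self _
        _ ≤ ‖_‖ := Complex.abs_re_le_norm _
    · have him : (N_S : ℝ) / 2 ≤ ∑ n, |(z n).im| := by
        push_neg at hc; linarith
      obtain ⟨φ, hφ, hre⟩ := sign_re_choice N_S (fun n => -Complex.I * z n)
      refine ⟨φ, hφ, ?_⟩
      have h1 : ∀ n, ((-Complex.I * z n).re) = (z n).im := by
        intro n; simp [Complex.mul_re]
      have h2 : (∑ n, φ n * (-Complex.I * z n)) = -Complex.I * ∑ n, φ n * z n := by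
        rw [Finset.mul_sum]; exact Finset.sum_congr rfl fun n _ => by ring
      have h3 : ‖∑ n, φ n * (-Complex.I * z n)‖
          = ‖∑ n, φ n * z n‖ := by
        rw [h2, norm_mul]; simp
      calc (N_S : ℝ) / 2 ≤ ∑ n, |(z n).im| := him
        _ = ∑ n, |((-Complex.I * z n).re)| := by
            exact Finset.sum_congr rfl fun n _ => by rw [h1]
        _ = (∑ n, φ n * (-Complex.I * z n)).re := hre.symm
        _ ≤ |(∑ n, φ n * (-Complex.I * z n)).re| := le_abs_self _
        _ ≤ ‖∑ n, φ n * (-Complex.I * z n)‖ := Complex.abs_re_le_norm _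
        _ = _ := h3
  obtain ⟨φ, hφ, hbig⟩ := key
  refine ⟨φ, hφ, ?_⟩
  have hdot : (star aO ⬝ᵥ (Matrix.diagonal φ).mulVec aI) = ∑ n, φ n * z n := by
    simp only [dotProduct, Matrix.mulVec_diagonal, Pi.star_apply, hzdef]
    exact Finset.sum_congr rfl fun n _ => by ring
  set c : ℂ := ∑ n, φ n * z n with hcdef
  have hentry : ∀ i j, ‖
      (((star aO ⬝ᵥ (Matrix.diagonal φ).mulVec aI) •
        Matrix.vecMulVec aR (star aT)) i j)‖ = ‖c‖ := by
    intro i j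
    rw [Matrix.smul_apply, Matrix.vecMulVec_apply, hdot]
    rw [smul_eq_mul, norm_mul, norm_mul]
    rw [Pi.star_apply, hstar, haR, haT]; ring
  have hsum : (∑ i, ∑ j, ‖
          (((star aO ⬝ᵥ (Matrix.diagonal φ).mulVec aI) •
            Matrix.vecMulVec aR (star aT)) i j)‖ ^ 2)
      = (N_R : ℝ) * N_T * ‖c‖ ^ 2 := by
    have : ∀ i, ∑ j, ‖
          (((star aO ⬝ᵥ (Matrix.diagonal φ).mulVec aI) •
            Matrix.vecMulVec aR (star aT)) i j)‖ ^ 2 = (N_T : ℝ) * ‖c‖ ^ 2 := by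
      intro i
      rw [Finset.sum_congr rfl fun j _ => by rw [hentry i j]]
      simp [mul_comm]
    rw [Finset.sum_congr rfl fun i _ => this i]
    simp; ring
  rw [hsum]
  have hsq : ((N_S : ℝ) / 2) ^ 2 ≤ ‖c‖ ^ 2 :=
    pow_le_pow_left₀ (by positivity) hbig 2
  have hNR : (0 : ℝ) ≤ N_R := Nat.cast_nonneg _
  have hNT : (0 : ℝ) ≤ N_T := Nat.cast_nonneg _
  nlinarith [mul_nonneg hNR hNT]
end
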